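/- Let H ∈ [0, 1/2), set R := artanh(2H), and define g₁ : ℝ → ℝ by g₁(s) = (2H·sinh s + √(1−4H²))/cosh s. Then for every s > R one has |g₁(s)| < 1 and g₁(s)/√(1 − g₁(s)²) = (sinh(R)·sinh(s) + 1)/(sinh(s) − sinh(R)). -/

import Mathlib

open Real

/-- The inverse hyperbolic tangent. -/
noncomputable def artanh (x : ℝ) : ℝ := Real.log ((1 + x) / (1 - x)) / 2

/-- For `H ∈ [0, 1/2)`, `R = artanh(2H)` and
`g₁(s) = (2H·sinh s + √(1−4H²))/cosh s`, for every `s > R` one has `|g₁(s)| < 1`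
and `g₁(s)/√(1 − g₁(s)²) = (sinh R·sinh s + 1)/(sinh s − sinh R)`. -/
theorem g_one_slope_formula
    (H : ℝ) (hH0 : 0 ≤ H) (hH : H < 1 / 2) (R : ℝ) (hR : R = _root_.artanh (2 * H))
    (g : ℝ → ℝ)
    (hg : ∀ s : ℝ, g s = (2 * H * Real.sinh s + Real.sqrt (1 - 4 * H ^ 2)) / Real.cosh s) :
    ∀ s : ℝ, R < s →
      |g s| < 1 ∧
      g s / Real.sqrt (1 - g s ^ 2) =
        (Real.sinh R * Real.sinh s + 1) / (Real.sinh s - Real.sinh R) := by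
  have ht1 : 2 * H < 1 := by linarith
  have hne : (1:ℝ) - 2 * H ≠ 0 := by linarith
  have hu : (0:ℝ) < (1 + 2 * H) / (1 - 2 * H) := by
    apply div_pos <;> linarith
  have hexp2R : Real.exp (2 * R) = (1 + 2 * H) / (1 - 2 * H) := by
    rw [hR]; unfold _root_.artanh
    rw [show 2 * (Real.log ((1 + 2 * H) / (1 - 2 * H)) / 2) =
      Real.log ((1 + 2 * H) / (1 - 2 * H)) by ring]
    exact Real.exp_log hu
  have hexpR : (0:ℝ) < Real.exp R := Real.exp_pos R
  have hsq : Real.exp R * Real.exp R = (1 + 2 * H) / (1 - 2 * H) := by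
    rw [← Real.exp_add, ← hexp2R]; ring_nf
  have hsinh : Real.sinh R = 2 * H * Real.cosh R := by
    rw [Real.sinh_eq, Real.cosh_eq]
    have h1 : Real.exp R * Real.exp R * (1 - 2 * H) = 1 + 2 * H := by
      rw [hsq, div_mul_cancel₀ _ hne]
    have h2 : Real.exp (-R) = (Real.exp R)⁻¹ := Real.exp_neg R
    rw [h2]
    field_simp
    nlinarith [hexpR]
  have hcoshR : (0:ℝ) < Real.cosh R := Real.cosh_pos R
  have hcR : Real.cosh R ^ 2 = Real.sinh R ^ 2 + 1 := by rw [Real.cosh_sq']; ring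
  have h14 : 0 ≤ 1 - 4 * H ^ 2 := by nlinarith
  have hsqrt : Real.sqrt (1 - 4 * H ^ 2) * Real.cosh R = 1 := by
    have hsqeq : (Real.sqrt (1 - 4 * H ^ 2) * Real.cosh R) ^ 2 = 1 := by
      rw [mul_pow, Real.sq_sqrt h14]
      have hs2 : Real.sinh R ^ 2 = 4 * H ^ 2 * Real.cosh R ^ 2 := by rw [hsinh]; ring
      linear_combination hcR + hs2
    have hpos : 0 ≤ Real.sqrt (1 - 4 * H ^ 2) * Real.cosh R :=
      mul_nonneg (Real.sqrt_nonneg _) hcoshR.le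
    nlinarith
  intro s hs
  have hcoshs : (0:ℝ) < Real.cosh s := Real.cosh_pos s
  have hcs : Real.cosh s ^ 2 = Real.sinh s ^ 2 + 1 := by rw [Real.cosh_sq']; ring
  have hgs : g s = (Real.sinh R * Real.sinh s + 1) / (Real.cosh R * Real.cosh s) := by
    rw [hg]
    rw [div_eq_div_iff hcoshs.ne' (by positivity)]
    linear_combination (-Real.sinh s * Real.cosh s) * hsinh + Real.cosh s * hsqrt
  have hsinhlt : Real.sinh R < Real.sinh s := Real.sinh_lt_sinh.mpr hs
  have hnum : (Real.cosh R * Real.cosh s) ^ 2 - (Real.sinh R * Real.sinh s + 1) ^ 2 =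
      (Real.sinh s - Real.sinh R) ^ 2 := by
    linear_combination Real.cosh s ^ 2 * hcR + (Real.sinh R ^ 2 + 1) * hcs
  have hkey : 1 - (g s) ^ 2 =
      ((Real.sinh s - Real.sinh R) / (Real.cosh R * Real.cosh s)) ^ 2 := by
    rw [hgs, div_pow, div_pow, ← hnum]
    field_simp
  have hdpos : (0:ℝ) < (Real.sinh s - Real.sinh R) / (Real.cosh R * Real.cosh s) := by
    apply div_pos (by linarith) (by positivity)
  have h1g : 0 < 1 - (g s) ^ 2 := by rw [hkey]; positivity
  constructor
  · rw [abs_lt]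
    constructor <;> nlinarith [sq_nonneg (g s)]
  · rw [hkey, Real.sqrt_sq hdpos.le, hgs]
    have hB : Real.sinh s - Real.sinh R ≠ 0 := by linarith
    have hD : Real.cosh R * Real.cosh s ≠ 0 := by positivity
    field_simp
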